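/- The eta-products of the cycle shapes 1⁴4² and 1²2¹8¹ (the M₁₂ conjugacy classes 4B and 8B) are not multiplicative: for g(τ) = η(τ)⁴·η(4τ)² and likewise for g(τ) = η(τ)²·η(2τ)·η(8τ), if a : ℕ → ℂ is any function such that g(τ) = ∑_{n=1}^{∞} a(n)·exp(iπnτ) for all τ in the upper half-plane ℍ, then it is not the case that a(1) = 1 and a(nm) = a(n)·a(m) for all coprime n, m; i.e. there exist coprime n, m with a(nm) ≠ a(n)·a(m), or a(1) ≠ 1. -/

import Mathlib

set_option maxHeartbeats 4000000
set_option maxRecDepth 100000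


/-- The Dedekind eta function
`η(τ) = exp(iπτ/12) · ∏_{n=1}^∞ (1 - exp(2πinτ))`. -/
noncomputable def dedekindEta (τ : ℂ) : ℂ :=
  Complex.exp ((Real.pi : ℂ) * Complex.I * τ / 12) *
    ∏' n : ℕ, (1 - Complex.exp (2 * (Real.pi : ℂ) * Complex.I * (n + 1) * τ))

open Real

namespace EtaNM

/-- Horner evaluation of an integer coefficient list. -/
def hEval (y : ℝ) : List ℤ → ℝ
  | [] => 0
  | c :: l => (c : ℝ) + y * hEval y l

/-- ℓ¹ norm of an integer coefficient list. -/
def hNorm : List ℤ → ℕ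
  | [] => 0
  | c :: l => c.natAbs + hNorm l

lemma hEval_le (y : ℝ) (h0 : 0 ≤ y) (h1 : y ≤ 1) : ∀ l : List ℤ, |hEval y l| ≤ (hNorm l : ℝ)
  | [] => by simp [hEval, hNorm]
  | c :: l => by
    have ih := hEval_le y h0 h1 l
    have h2 : |y * hEval y l| ≤ (hNorm l : ℝ) := by
      rw [abs_mul, abs_of_nonneg h0]
      calc y * |hEval y l| ≤ 1 * (hNorm l : ℝ) :=
            mul_le_mul h1 ih (abs_nonneg _) zero_le_one
        _ = (hNorm l : ℝ) := one_mul _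
    have h3 : |(c : ℝ)| = (c.natAbs : ℝ) := by
      rw [Nat.cast_natAbs, Int.cast_abs]
    calc |hEval y (c :: l)| = |(c : ℝ) + y * hEval y l| := rfl
      _ ≤ |(c : ℝ)| + |y * hEval y l| := abs_add_le _ _
      _ ≤ (c.natAbs : ℝ) + (hNorm l : ℝ) := by rw [h3]; linarith
      _ = (hNorm (c :: l) : ℝ) := by simp [hNorm]

lemma summable_pow_succ {r : ℝ} (h0 : 0 ≤ r) (h1 : r < 1) :
    Summable (fun n : ℕ => r ^ (n + 1)) := by
  have := (summable_geometric_of_lt_one h0 h1).mul_left r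
  simpa [pow_succ'] using this

lemma tsum_pow_succ_le {r : ℝ} (h0 : 0 ≤ r) (h1 : r ≤ 1 / 2) :
    ∑' n : ℕ, r ^ (n + 1) ≤ 2 * r := by
  have h1' : r < 1 := by linarith
  have he : ∑' n : ℕ, r ^ (n + 1) = r * ∑' n : ℕ, r ^ n := by
    rw [← tsum_mul_left]
    exact tsum_congr fun n => (pow_succ' r n)
  rw [he, tsum_geometric_of_lt_one h0 h1']
  have h2 : (0:ℝ) < 1 - r := by linarith
  have h3 : (1 - r)⁻¹ ≤ 2 := by
    rw [inv_le_comm₀ h2 (by norm_num)]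
    linarith
  nlinarith

lemma log_one_sub_ge {x : ℝ} (hx0 : 0 < x) (hx : x ≤ 1 / 2) :
    -(2 * x) ≤ Real.log (1 - x) := by
  rw [Real.le_log_iff_exp_le (by linarith : (0:ℝ) < 1 - x)]
  have key : rexp (-(2 * x)) * rexp (2 * x) = 1 := by rw [← Real.exp_add]; simp
  have h5 : (1:ℝ) ≤ (1 - x) * rexp (2 * x) := by
    have hmul := mul_le_mul_of_nonneg_left (Real.add_one_le_exp (2 * x))
      (by linarith : (0:ℝ) ≤ 1 - x)
    nlinarith [mul_nonneg hx0.le (by linarith : (0:ℝ) ≤ 1 - 2 * x)]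
  have h6 : rexp (-(2 * x)) * rexp (2 * x) ≤ (1 - x) * rexp (2 * x) := by
    rw [key]; exact h5
  exact le_of_mul_le_mul_right h6 (Real.exp_pos _)

lemma log_split (q : ℝ) (hq0 : 0 < q) (hq : q ≤ 1 / 2) (k K : ℕ) (hk : 1 ≤ k) :
    ∃ T : ℝ,
      HasProd (fun n : ℕ => (1 - q ^ (k * (n + 1))))
        (Real.exp ((∑ n ∈ Finset.range K, Real.log (1 - q ^ (k * (n + 1)))) + T)) ∧
      T ≤ 0 ∧ -T ≤ 4 * q ^ (k * (K + 1)) := by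
  have hq1 : q < 1 := by linarith
  have hr0 : 0 ≤ q ^ k := by positivity
  have hrk : q ^ k ≤ 1 / 2 := by
    calc q ^ k ≤ q ^ 1 := pow_le_pow_of_le_one hq0.le hq1.le hk
      _ = q := pow_one q
      _ ≤ 1 / 2 := hq
  have hx_le : ∀ m : ℕ, 1 ≤ m → q ^ m ≤ 1 / 2 := fun m hm => by
    calc q ^ m ≤ q ^ 1 := pow_le_pow_of_le_one hq0.le hq1.le hm
      _ = q := pow_one q
      _ ≤ 1 / 2 := hq
  have hkn : ∀ n : ℕ, 1 ≤ k * (n + 1) := fun n => Nat.one_le_iff_ne_zero.mpr (by positivity)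
  have hfac : ∀ n : ℕ, (0:ℝ) < 1 - q ^ (k * (n + 1)) := fun n => by
    have := hx_le _ (hkn n); linarith
  set f : ℕ → ℝ := fun n => Real.log (1 - q ^ (k * (n + 1))) with hf
  have hlog_ub : ∀ n, f n ≤ 0 := fun n => by
    apply Real.log_nonpos (le_of_lt (hfac n))
    have : (0:ℝ) ≤ q ^ (k * (n + 1)) := by positivity
    linarith
  have hlog_lb : ∀ n, -(2 * q ^ (k * (n + 1))) ≤ f n := fun n =>
    log_one_sub_ge (by positivity) (hx_le _ (hkn n))
  have hsum_x : Summable (fun n : ℕ => q ^ (k * (n + 1))) := by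
    have hfe : (fun n : ℕ => q ^ (k * (n + 1))) = fun n => (q ^ k) ^ (n + 1) := by
      funext n; rw [← pow_mul]
    rw [hfe]
    exact summable_pow_succ hr0 (lt_of_le_of_lt hrk (by norm_num))
  have hsum_f : Summable f := by
    apply Summable.of_norm_bounded (hsum_x.mul_left 2)
    intro n
    rw [Real.norm_eq_abs, abs_le]
    constructor
    · have := hlog_lb n; linarith
    · have h1 := hlog_ub n
      have h2 : (0:ℝ) ≤ 2 * q ^ (k * (n + 1)) := by positivity
      linarith
  refine ⟨∑' n : ℕ, f (n + K), ?_, ?_, ?_⟩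
  · have hsplit : (∑ n ∈ Finset.range K, f n) + ∑' n : ℕ, f (n + K) = ∑' n, f n :=
      Summable.sum_add_tsum_nat_add K hsum_f
    have hp : HasProd (fun n => rexp (f n)) (rexp (∑' n, f n)) := hsum_f.hasSum.rexp
    rw [← hsplit] at hp
    have hfe : (fun n : ℕ => (1 - q ^ (k * (n + 1)))) = fun n => rexp (f n) :=
      funext fun n => (Real.exp_log (hfac n)).symm
    rw [hfe]
    exact hp
  · exact tsum_nonpos fun n => hlog_ub _
  · have hsum_fK : Summable (fun n => f (n + K)) := (summable_nat_add_iff K).mpr hsum_f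
    have hsum_xK : Summable (fun n : ℕ => q ^ (k * (n + K + 1))) :=
      (summable_nat_add_iff K).mpr hsum_x
    rw [← tsum_neg]
    have h2 : ∑' n : ℕ, -(f (n + K)) ≤ ∑' n : ℕ, 2 * q ^ (k * (n + K + 1)) := by
      apply Summable.tsum_le_tsum _ hsum_fK.neg (hsum_xK.mul_left 2)
      intro n
      have := hlog_lb (n + K)
      linarith
    refine h2.trans ?_
    have h3 : (fun n : ℕ => 2 * q ^ (k * (n + K + 1)))
        = fun n : ℕ => (2 * q ^ (k * K)) * (q ^ k) ^ (n + 1) := by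
      funext n
      rw [← pow_mul, mul_assoc, ← pow_add]
      congr 2
      ring
    rw [h3, tsum_mul_left]
    have h4 : ∑' n : ℕ, (q ^ k) ^ (n + 1) ≤ 2 * q ^ k := tsum_pow_succ_le hr0 hrk
    have h5 : (0:ℝ) ≤ 2 * q ^ (k * K) := by positivity
    calc (2 * q ^ (k * K)) * ∑' n : ℕ, (q ^ k) ^ (n + 1)
        ≤ (2 * q ^ (k * K)) * (2 * q ^ k) := mul_le_mul_of_nonneg_left h4 h5
      _ = 4 * q ^ (k * (K + 1)) := by rw [show k * (K + 1) = k * K + k by ring, pow_add]; ring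


lemma cexp_val (t : ℝ) (n : ℕ) :
    Complex.exp ((Real.pi : ℂ) * Complex.I * ((n : ℂ) + 1) * ((t : ℂ) * Complex.I))
      = (((Real.exp (-(π * t))) ^ (n + 1) : ℝ) : ℂ) := by
  have h : (Real.pi : ℂ) * Complex.I * ((n : ℂ) + 1) * ((t : ℂ) * Complex.I)
      = (((((n + 1 : ℕ)) : ℝ) * (-(π * t)) : ℝ) : ℂ) := by
    push_cast
    linear_combination ((Real.pi : ℂ) * ((n : ℂ) + 1) * (t : ℂ)) * Complex.I_sq
  rw [h, ← Complex.ofReal_exp, Real.exp_nat_mul]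

lemma eta_val (t : ℝ) (j : ℕ) (L : ℝ)
    (hL : HasProd (fun n : ℕ => (1 - Real.exp (-(π * t)) ^ ((2 * j) * (n + 1)))) (Real.exp L)) :
    dedekindEta ((j : ℂ) * ((t : ℂ) * Complex.I))
      = ((Real.exp (-(π * j * t) / 12 + L) : ℝ) : ℂ) := by
  have h1 : (Real.pi : ℂ) * Complex.I * ((j : ℂ) * ((t : ℂ) * Complex.I)) / 12
      = ((-(π * j * t) / 12 : ℝ) : ℂ) := by
    push_cast
    linear_combination ((Real.pi : ℂ) * (j : ℂ) * (t : ℂ) / 12) * Complex.I_sq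
  have h2 : ∀ n : ℕ, (2 * (Real.pi : ℂ) * Complex.I * ((n : ℂ) + 1) * ((j : ℂ) * ((t : ℂ) * Complex.I)))
      = (((((2 * j) * (n + 1) : ℕ)) : ℝ) * (-(π * t)) : ℝ) := by
    intro n
    push_cast
    linear_combination (2 * (Real.pi : ℂ) * ((n : ℂ) + 1) * (j : ℂ) * (t : ℂ)) * Complex.I_sq
  unfold dedekindEta
  rw [h1, ← Complex.ofReal_exp]
  have h3 : (fun n : ℕ => 1 - Complex.exp (2 * (Real.pi : ℂ) * Complex.I * ((n : ℂ) + 1) * ((j : ℂ) * ((t : ℂ) * Complex.I))))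
      = fun n : ℕ => ((1 - Real.exp (-(π * t)) ^ ((2 * j) * (n + 1)) : ℝ) : ℂ) := by
    funext n
    rw [h2 n, ← Complex.ofReal_exp, Real.exp_nat_mul]
    push_cast
    ring
  rw [h3]
  have h4 := (hL.map Complex.ofRealHom.toMonoidHom Complex.continuous_ofReal).tprod_eq
  simp only [Function.comp_def] at h4
  have h4' : ∏' n : ℕ, ((1 - rexp (-(π * t)) ^ ((2 * j) * (n + 1)) : ℝ) : ℂ)
      = ((rexp L : ℝ) : ℂ) := h4
  rw [h4', ← Complex.ofReal_mul, ← Real.exp_add]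

lemma g1_val (t : ℝ) (L2 L8 : ℝ)
    (h2 : HasProd (fun n : ℕ => (1 - Real.exp (-(π * t)) ^ (2 * (n + 1)))) (Real.exp L2))
    (h8 : HasProd (fun n : ℕ => (1 - Real.exp (-(π * t)) ^ (8 * (n + 1)))) (Real.exp L8)) :
    dedekindEta ((t : ℂ) * Complex.I) ^ 4 * dedekindEta (4 * ((t : ℂ) * Complex.I)) ^ 2
      = ((Real.exp (-(π * t) + (4 * L2 + 2 * L8)) : ℝ) : ℂ) := by
  have e1 := eta_val t 1 L2 (by simpa using h2)
  have e4 := eta_val t 4 L8 (by simpa using h8)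
  have c1 : ((1 : ℕ) : ℂ) * ((t : ℂ) * Complex.I) = (t : ℂ) * Complex.I := by norm_num
  have c4 : ((4 : ℕ) : ℂ) * ((t : ℂ) * Complex.I) = 4 * ((t : ℂ) * Complex.I) := by norm_num
  rw [c1] at e1
  rw [c4] at e4
  rw [e1, e4, ← Complex.ofReal_pow, ← Complex.ofReal_pow, ← Complex.ofReal_mul]
  congr 1
  rw [← Real.exp_nat_mul, ← Real.exp_nat_mul, ← Real.exp_add]
  congr 1
  push_cast
  ring

lemma g2_val (t : ℝ) (L2 L4 L16 : ℝ)
    (h2 : HasProd (fun n : ℕ => (1 - Real.exp (-(π * t)) ^ (2 * (n + 1)))) (Real.exp L2))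
    (h4 : HasProd (fun n : ℕ => (1 - Real.exp (-(π * t)) ^ (4 * (n + 1)))) (Real.exp L4))
    (h16 : HasProd (fun n : ℕ => (1 - Real.exp (-(π * t)) ^ (16 * (n + 1)))) (Real.exp L16)) :
    dedekindEta ((t : ℂ) * Complex.I) ^ 2 * dedekindEta (2 * ((t : ℂ) * Complex.I))
        * dedekindEta (8 * ((t : ℂ) * Complex.I))
      = ((Real.exp (-(π * t) + (2 * L2 + L4 + L16)) : ℝ) : ℂ) := by
  have e1 := eta_val t 1 L2 (by simpa using h2)
  have e2 := eta_val t 2 L4 (by simpa using h4)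
  have e8 := eta_val t 8 L16 (by simpa using h16)
  have c1 : ((1 : ℕ) : ℂ) * ((t : ℂ) * Complex.I) = (t : ℂ) * Complex.I := by norm_num
  have c2 : ((2 : ℕ) : ℂ) * ((t : ℂ) * Complex.I) = 2 * ((t : ℂ) * Complex.I) := by norm_num
  have c8 : ((8 : ℕ) : ℂ) * ((t : ℂ) * Complex.I) = 8 * ((t : ℂ) * Complex.I) := by norm_num
  rw [c1] at e1
  rw [c2] at e2
  rw [c8] at e8
  rw [e1, e2, e8, ← Complex.ofReal_pow, ← Complex.ofReal_mul, ← Complex.ofReal_mul]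
  congr 1
  rw [← Real.exp_nat_mul, ← Real.exp_add, ← Real.exp_add]
  congr 1
  push_cast
  ring

lemma tail_le (a : ℕ → ℂ) (M : ℝ)
    (hM : HasSum (fun n : ℕ => ‖a (n + 1)‖ * (1 / 2 : ℝ) ^ (n + 1)) M)
    (D : ℕ) (q : ℝ) (hq0 : 0 < q) (hq : q ≤ 1 / 4) :
    ‖∑' n : ℕ, a (n + D + 1) * ((q : ℝ) : ℂ) ^ (n + D + 1)‖ ≤ M * (2 * q) ^ (D + 1) := by
  have h2q0 : (0:ℝ) ≤ 2 * q := by linarith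
  have h2q1 : 2 * q ≤ 1 := by linarith
  have hMsum : Summable (fun n : ℕ => ‖a (n + 1)‖ * (1 / 2 : ℝ) ^ (n + 1)) := hM.summable
  have hshift : Summable (fun n : ℕ => ‖a (n + D + 1)‖ * (1 / 2 : ℝ) ^ (n + D + 1)) :=
    (summable_nat_add_iff D).mpr hMsum
  have hnorm_eq : ∀ n : ℕ, ‖a (n + D + 1) * ((q : ℝ) : ℂ) ^ (n + D + 1)‖
      = ‖a (n + D + 1)‖ * q ^ (n + D + 1) := by
    intro n
    rw [norm_mul, norm_pow, Complex.norm_real, Real.norm_eq_abs, abs_of_nonneg hq0.le]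
  have hle : ∀ n : ℕ, ‖a (n + D + 1)‖ * q ^ (n + D + 1)
      ≤ ‖a (n + D + 1)‖ * (1 / 2 : ℝ) ^ (n + D + 1) * (2 * q) ^ (D + 1) := by
    intro n
    have hq_eq : q ^ (n + D + 1) = (1 / 2 : ℝ) ^ (n + D + 1) * (2 * q) ^ (n + D + 1) := by
      rw [← mul_pow]
      congr 1
      ring
    rw [hq_eq, ← mul_assoc]
    apply mul_le_mul_of_nonneg_left _ (by positivity)
    exact pow_le_pow_of_le_one h2q0 h2q1 (by omega)
  have hsumg : Summable (fun n : ℕ => ‖a (n + D + 1)‖ * (1 / 2 : ℝ) ^ (n + D + 1) * (2 * q) ^ (D + 1)) :=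
    hshift.mul_right _
  have hsum_norm : Summable (fun n : ℕ => ‖a (n + D + 1) * ((q : ℝ) : ℂ) ^ (n + D + 1)‖) := by
    apply Summable.of_nonneg_of_le (fun n => norm_nonneg _) (fun n => ?_) hsumg
    rw [hnorm_eq]
    exact hle n
  calc ‖∑' n : ℕ, a (n + D + 1) * ((q : ℝ) : ℂ) ^ (n + D + 1)‖
      ≤ ∑' n : ℕ, ‖a (n + D + 1) * ((q : ℝ) : ℂ) ^ (n + D + 1)‖ := norm_tsum_le_tsum_norm hsum_norm
    _ ≤ ∑' n : ℕ, ‖a (n + D + 1)‖ * (1 / 2 : ℝ) ^ (n + D + 1) * (2 * q) ^ (D + 1) := by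
        apply Summable.tsum_le_tsum _ hsum_norm hsumg
        intro n
        rw [hnorm_eq]
        exact hle n
    _ = (∑' n : ℕ, ‖a (n + D + 1)‖ * (1 / 2 : ℝ) ^ (n + D + 1)) * (2 * q) ^ (D + 1) := tsum_mul_right
    _ ≤ M * (2 * q) ^ (D + 1) := by
        apply mul_le_mul_of_nonneg_right _ (by positivity)
        have hsplit := Summable.sum_add_tsum_nat_add D hMsum
        have hMeq : ∑' n : ℕ, ‖a (n + 1)‖ * (1 / 2 : ℝ) ^ (n + 1) = M := hM.tsum_eq
        have hpos : (0:ℝ) ≤ ∑ i ∈ Finset.range D, ‖a (i + 1)‖ * (1 / 2 : ℝ) ^ (i + 1) := by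
          positivity
        rw [hMeq] at hsplit
        linarith [hsplit]

lemma zero_of_norm_le (x : ℂ) (K ε : ℝ) (hε : 0 < ε)
    (h : ∀ q : ℝ, 0 < q → q ≤ ε → ‖x‖ ≤ K * q) : x = 0 := by
  by_contra hx
  have hx0 : 0 < ‖x‖ := norm_pos_iff.mpr hx
  have hK : 0 < K := by
    have := h ε hε le_rfl
    nlinarith
  have hq0 : 0 < min ε (‖x‖ / (2 * K)) := lt_min hε (by positivity)
  have h1 := h _ hq0 (min_le_left _ _)
  have h2 : K * min ε (‖x‖ / (2 * K)) ≤ K * (‖x‖ / (2 * K)) :=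
    mul_le_mul_of_nonneg_left (min_le_right _ _) hK.le
  have h3 : K * (‖x‖ / (2 * K)) = ‖x‖ / 2 := by
    field_simp
  linarith

lemma extract (ε : ℝ) (hε : 0 < ε) (hε1 : ε ≤ 1) :
    ∀ (N : ℕ) (d : ℕ → ℂ) (C : ℝ),
      (∀ q : ℝ, 0 < q → q ≤ ε → ‖∑ n ∈ Finset.range N, d n * ((q : ℝ) : ℂ) ^ n‖ ≤ C * q ^ N) →
      ∀ n < N, d n = 0 := by
  intro N
  induction N with
  | zero => exact fun d C h n hn => absurd hn (by omega)
  | succ N ih =>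
    intro d C h
    have hd0 : d 0 = 0 := by
      apply zero_of_norm_le _ (C + ∑ n ∈ Finset.range N, ‖d (n + 1)‖) ε hε
      intro q hq0 hqε
      have hq1 : q ≤ 1 := hqε.trans hε1
      have hqn : ∀ m : ℕ, q ^ (m + 1) ≤ q := by
        intro m
        calc q ^ (m + 1) ≤ q ^ 1 := pow_le_pow_of_le_one hq0.le hq1 (by omega)
          _ = q := pow_one q
      have hsplit : ∑ n ∈ Finset.range (N + 1), d n * ((q : ℝ) : ℂ) ^ n
          = (∑ n ∈ Finset.range N, d (n + 1) * ((q : ℝ) : ℂ) ^ (n + 1)) + d 0 := by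
        rw [Finset.sum_range_succ']
        simp
      have hb := h q hq0 hqε
      have hd0b : ‖d 0‖ ≤ ‖∑ n ∈ Finset.range (N + 1), d n * ((q : ℝ) : ℂ) ^ n‖
          + ‖∑ n ∈ Finset.range N, d (n + 1) * ((q : ℝ) : ℂ) ^ (n + 1)‖ := by
        have : d 0 = (∑ n ∈ Finset.range (N + 1), d n * ((q : ℝ) : ℂ) ^ n)
            - ∑ n ∈ Finset.range N, d (n + 1) * ((q : ℝ) : ℂ) ^ (n + 1) := by
          rw [hsplit]
          ring
        rw [this]
        exact norm_sub_le _ _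
      have hsum_b : ‖∑ n ∈ Finset.range N, d (n + 1) * ((q : ℝ) : ℂ) ^ (n + 1)‖
          ≤ (∑ n ∈ Finset.range N, ‖d (n + 1)‖) * q := by
        calc ‖∑ n ∈ Finset.range N, d (n + 1) * ((q : ℝ) : ℂ) ^ (n + 1)‖
            ≤ ∑ n ∈ Finset.range N, ‖d (n + 1) * ((q : ℝ) : ℂ) ^ (n + 1)‖ :=
              norm_sum_le _ _
          _ ≤ ∑ n ∈ Finset.range N, ‖d (n + 1)‖ * q := by
              apply Finset.sum_le_sum
              intro n _
              rw [norm_mul, norm_pow, Complex.norm_real, Real.norm_eq_abs,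
                abs_of_nonneg hq0.le]
              exact mul_le_mul_of_nonneg_left (hqn n) (norm_nonneg _)
          _ = (∑ n ∈ Finset.range N, ‖d (n + 1)‖) * q := by
              rw [Finset.sum_mul]
      have hCq : C * q ^ (N + 1) ≤ C * q ∨ C < 0 := by
        by_cases hC : 0 ≤ C
        · left
          exact mul_le_mul_of_nonneg_left (hqn N) hC
        · right
          linarith
      rcases hCq with hCq | hCq
      · calc ‖d 0‖ ≤ C * q ^ (N + 1) + (∑ n ∈ Finset.range N, ‖d (n + 1)‖) * q := by
              linarith [hd0b, hb, hsum_b]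
          _ ≤ C * q + (∑ n ∈ Finset.range N, ‖d (n + 1)‖) * q := by linarith
          _ = (C + ∑ n ∈ Finset.range N, ‖d (n + 1)‖) * q := by ring
      · exfalso
        have h1 := h q hq0 hqε
        have h2 : C * q ^ (N + 1) < 0 := mul_neg_of_neg_of_pos hCq (by positivity)
        linarith [norm_nonneg (∑ n ∈ Finset.range (N + 1), d n * ((q : ℝ) : ℂ) ^ n)]
    have h' : ∀ q : ℝ, 0 < q → q ≤ ε →
        ‖∑ n ∈ Finset.range N, d (n + 1) * ((q : ℝ) : ℂ) ^ n‖ ≤ C * q ^ N := by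
      intro q hq0 hqε
      have hb := h q hq0 hqε
      have hsplit : ∑ n ∈ Finset.range (N + 1), d n * ((q : ℝ) : ℂ) ^ n
          = ((q : ℝ) : ℂ) * ∑ n ∈ Finset.range N, d (n + 1) * ((q : ℝ) : ℂ) ^ n := by
        rw [Finset.sum_range_succ', hd0, Finset.mul_sum]
        simp only [zero_mul, add_zero]
        apply Finset.sum_congr rfl
        intro n _
        ring
      rw [hsplit, norm_mul, Complex.norm_real, Real.norm_eq_abs, abs_of_nonneg hq0.le] at hb
      have hb2 : q * ‖∑ n ∈ Finset.range N, d (n + 1) * ((q : ℝ) : ℂ) ^ n‖ ≤ q * (C * q ^ N) := by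
        calc q * ‖∑ n ∈ Finset.range N, d (n + 1) * ((q : ℝ) : ℂ) ^ n‖ ≤ C * q ^ (N + 1) := hb
          _ = q * (C * q ^ N) := by ring
      exact le_of_mul_le_mul_left hb2 hq0
    intro n hn
    match n with
    | 0 => exact hd0
    | m + 1 => exact ih (fun n => d (n + 1)) C h' m (by omega)

lemma coeffs_eq (a : ℕ → ℂ) (c : ℕ → ℂ) (N : ℕ) (C : ℝ)
    (h : ∀ q : ℝ, 0 < q → q ≤ 1 / 4 →
      ‖(∑ n ∈ Finset.range N, a (n + 1) * ((q : ℝ) : ℂ) ^ (n + 1))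
        - ∑ n ∈ Finset.range N, c n * ((q : ℝ) : ℂ) ^ (n + 1)‖ ≤ C * q ^ (N + 1)) :
    ∀ n < N, a (n + 1) = c n := by
  have key : ∀ n < N, a (n + 1) - c n = 0 := by
    apply extract (1 / 4) (by norm_num) (by norm_num) N (fun n => a (n + 1) - c n) C
    intro q hq0 hqε
    have hb := h q hq0 hqε
    have hsplit : (∑ n ∈ Finset.range N, a (n + 1) * ((q : ℝ) : ℂ) ^ (n + 1))
        - ∑ n ∈ Finset.range N, c n * ((q : ℝ) : ℂ) ^ (n + 1)
        = ((q : ℝ) : ℂ) * ∑ n ∈ Finset.range N, (a (n + 1) - c n) * ((q : ℝ) : ℂ) ^ n := by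
      rw [Finset.mul_sum, ← Finset.sum_sub_distrib]
      apply Finset.sum_congr rfl
      intro n _
      ring
    rw [hsplit, norm_mul, Complex.norm_real, Real.norm_eq_abs, abs_of_nonneg hq0.le] at hb
    have hb2 : q * ‖∑ n ∈ Finset.range N, (a (n + 1) - c n) * ((q : ℝ) : ℂ) ^ n‖
        ≤ q * (C * q ^ N) := by
      calc q * ‖∑ n ∈ Finset.range N, (a (n + 1) - c n) * ((q : ℝ) : ℂ) ^ n‖
          ≤ C * q ^ (N + 1) := hb
        _ = q * (C * q ^ N) := by ring
    exact le_of_mul_le_mul_left hb2 hq0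
  intro n hn
  have := key n hn
  exact sub_eq_zero.mp this

def L1co : List ℤ := [-36, -31, -20, 18, 48, 20, -24, -126, 56, 58, 172, 52, -180, -172, -200, 136, 140, 101, -180, -44, 164, 483, 532, -136, -524, -896, -584, -146, 132, -190, 316, 618, 1608, 2027, 1176, -46, -1820, -2427, -2992, -2470, -2868, -857, 932, 4158, 7048, 7080, 6016, 2558, -1184, -5908, -9676, -14338, -13472, -10190, -1608, 8240, 16820, 22012, 23648, 20958, 11772, -683, -20904, -34090, -44132, -40378, -27528, -7318, 15412, 39155, 58992, 66714, 62720, 35178, 608, -41452, -73752, -93719, -93092, -76632, -36960, 14766, 69712, 116916, 133568, 126565, 85220, 28068, -43612, -105939, -158508, -172554, -150456, -92569, -7252, 76384, 151028, 193182, 201028, 160894, 89800, -15278, -112124, -190404, -224432, -210758, -155508, -67084, 36468, 139356, 208480, 242212, 208480, 139356, 36468, -67084, -155508, -210758, -224432, -190404, -112124, -15278, 89800, 160894, 201028, 193182, 151028, 76384, -7252, -92569, -150456, -172554, -158508, -105939, -43612, 28068, 85220, 126565, 133568, 116916, 69712, 14766, -36960, -76632, -93092, -93719, -73752, -41452, 608,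 35178, 62720, 66714, 58992, 39155, 15412, -7318, -27528, -40378, -44132, -34090, -20904, -683, 11772, 20958, 23648, 22012, 16820, 8240, -1608, -10190, -13472, -14338, -9676, -5908, -1184, 2558, 6016, 7080, 7048, 4158, 932, -857, -2868, -2470, -2992, -2427, -1820, -46, 1176, 2027, 1608, 618, 316, -190, 132, -146, -584, -896, -524, -136, 532, 483, 164, -44, -180, 101, 140, 136, -200, -172, -180, 52, 172, 58, 56, -126, -24, 20, 48, 18, -20, -31, -36, 32, 12, 18, -8, -14, 4, -7, 8, 2, -4, 1]

def L2co : List ℤ := [2, -8, -1, 4, 4, 18, 6, -8, -7, -22, -17, -6, -3, 36, 36, 22, 14, -28, -35, -40, -52, 0, 36, 46, 68, 22, 0, -22, -68, -46, -36, 0, 52, 40, 35, 28, -14, -22, -36, -36, 3, 6, 17, 22, 7, 8, -6, -18, -4, -4, 1, 8, -2, 4, 2, -2, -1, -4, 2, 2, -1]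

def c1f : ℕ → ℂ := fun n =>
  if n = 0 then 1 else if n = 2 then -4 else if n = 4 then 2 else if n = 6 then 8
  else if n = 8 then -7 else if n = 10 then 4 else if n = 12 then -14 else if n = 14 then -8
  else if n = 16 then 18 else if n = 18 then 12 else if n = 20 then 32 else 0

def c2f : ℕ → ℂ := fun n =>
  if n = 0 then 1 else if n = 2 then -2 else if n = 4 then -2 else if n = 6 then 4
  else if n = 8 then 1 else if n = 10 then 2 else if n = 12 then -2 else if n = 14 then -4
  else 0

lemma sum_c1 (z : ℂ) : ∑ n ∈ Finset.range 22, c1f n * z ^ (n + 1)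
    = z - 4 * z ^ 3 + 2 * z ^ 5 + 8 * z ^ 7 - 7 * z ^ 9 + 4 * z ^ 11 - 14 * z ^ 13
      - 8 * z ^ 15 + 18 * z ^ 17 + 12 * z ^ 19 + 32 * z ^ 21 := by
  simp only [Finset.sum_range_succ, Finset.sum_range_zero, c1f]
  norm_num
  ring

lemma sum_c2 (z : ℂ) : ∑ n ∈ Finset.range 15, c2f n * z ^ (n + 1)
    = z - 2 * z ^ 3 - 2 * z ^ 5 + 4 * z ^ 7 + z ^ 9 + 2 * z ^ 11 - 2 * z ^ 13 - 4 * z ^ 15 := by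
  simp only [Finset.sum_range_succ, Finset.sum_range_zero, c2f]
  norm_num
  ring

lemma polyid1 (q : ℝ) :
    q * ((∏ n ∈ Finset.range 10, (1 - q ^ (2 * (n + 1)))) ^ 4
        * (∏ n ∈ Finset.range 2, (1 - q ^ (8 * (n + 1)))) ^ 2)
    = (q - 4 * q ^ 3 + 2 * q ^ 5 + 8 * q ^ 7 - 7 * q ^ 9 + 4 * q ^ 11 - 14 * q ^ 13
        - 8 * q ^ 15 + 18 * q ^ 17 + 12 * q ^ 19 + 32 * q ^ 21)
      + q ^ 23 * hEval (q ^ 2) L1co := by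
  simp only [Finset.prod_range_succ, Finset.prod_range_zero, L1co, hEval,
    Nat.reduceMul, Nat.reduceAdd, one_mul]
  push_cast
  ring

lemma polyid2 (q : ℝ) :
    q * ((∏ n ∈ Finset.range 7, (1 - q ^ (2 * (n + 1)))) ^ 2
        * ∏ n ∈ Finset.range 3, (1 - q ^ (4 * (n + 1))))
    = (q - 2 * q ^ 3 - 2 * q ^ 5 + 4 * q ^ 7 + q ^ 9 + 2 * q ^ 11 - 2 * q ^ 13 - 4 * q ^ 15)
      + q ^ 16 * (q * hEval (q ^ 2) L2co) := by
  simp only [Finset.prod_range_succ, Finset.prod_range_zero, L2co, hEval,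
    Nat.reduceMul, Nat.reduceAdd, one_mul]
  push_cast
  ring

lemma key1 (a : ℕ → ℂ) (M : ℝ)
    (hM : HasSum (fun n : ℕ => ‖a (n + 1)‖ * (1 / 2 : ℝ) ^ (n + 1)) M)
    (hsum : ∀ τ : ℂ, 0 < τ.im → HasSum (fun n : ℕ => a (n + 1) *
        Complex.exp ((Real.pi : ℂ) * Complex.I * ((n : ℂ) + 1) * τ))
      (dedekindEta τ ^ 4 * dedekindEta (4 * τ) ^ 2)) :
    ∀ n < 22, a (n + 1) = c1f n := by
  apply coeffs_eq a c1f 22 (M * 2 ^ 23 + ((hNorm L1co : ℝ) + 24))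
  intro q hq0 hq4
  have hq2 : q ≤ 1 / 2 := by linarith
  have hq1 : q < 1 := by linarith
  set t : ℝ := -Real.log q / π with ht_def
  have ht : 0 < t := by
    apply div_pos _ Real.pi_pos
    have := Real.log_neg hq0 hq1
    linarith
  have hqt : Real.exp (-(π * t)) = q := by
    rw [ht_def, show -(π * (-Real.log q / π)) = Real.log q by field_simp]
    exact Real.exp_log hq0
  obtain ⟨T2, hP2, hT2n, hT2b⟩ := log_split q hq0 hq2 2 10 (by norm_num)
  obtain ⟨T8, hP8, hT8n, hT8b⟩ := log_split q hq0 hq2 8 2 (by norm_num)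
  have hP2' : HasProd (fun n : ℕ => (1 - Real.exp (-(π * t)) ^ (2 * (n + 1))))
      (Real.exp ((∑ n ∈ Finset.range 10, Real.log (1 - q ^ (2 * (n + 1)))) + T2)) := by
    rw [hqt]; exact hP2
  have hP8' : HasProd (fun n : ℕ => (1 - Real.exp (-(π * t)) ^ (8 * (n + 1))))
      (Real.exp ((∑ n ∈ Finset.range 2, Real.log (1 - q ^ (8 * (n + 1)))) + T8)) := by
    rw [hqt]; exact hP8
  have hg := g1_val t _ _ hP2' hP8'
  have him : (0:ℝ) < ((t : ℂ) * Complex.I).im := by simpa using ht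
  have hs := hsum ((t : ℂ) * Complex.I) him
  rw [hg] at hs
  have hfun : (fun n : ℕ => a (n + 1) *
        Complex.exp ((Real.pi : ℂ) * Complex.I * ((n : ℂ) + 1) * ((t : ℂ) * Complex.I)))
      = fun n : ℕ => a (n + 1) * ((q : ℝ) : ℂ) ^ (n + 1) := by
    funext n
    rw [cexp_val t n, hqt]
    push_cast
    ring
  rw [hfun] at hs
  have hfacpos : ∀ m : ℕ, 1 ≤ m → (0:ℝ) < 1 - q ^ m := by
    intro m hm
    have h1 : q ^ m ≤ q ^ 1 := pow_le_pow_of_le_one hq0.le hq1.le hm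
    rw [pow_one] at h1
    linarith
  have hexpS2 : Real.exp (∑ n ∈ Finset.range 10, Real.log (1 - q ^ (2 * (n + 1))))
      = ∏ n ∈ Finset.range 10, (1 - q ^ (2 * (n + 1))) := by
    rw [Real.exp_sum]
    exact Finset.prod_congr rfl fun n _ => Real.exp_log (hfacpos _ (by omega))
  have hexpS8 : Real.exp (∑ n ∈ Finset.range 2, Real.log (1 - q ^ (8 * (n + 1))))
      = ∏ n ∈ Finset.range 2, (1 - q ^ (8 * (n + 1))) := by
    rw [Real.exp_sum]
    exact Finset.prod_congr rfl fun n _ => Real.exp_log (hfacpos _ (by omega))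
  have hval : Real.exp (-(π * t)
        + (4 * ((∑ n ∈ Finset.range 10, Real.log (1 - q ^ (2 * (n + 1)))) + T2)
          + 2 * ((∑ n ∈ Finset.range 2, Real.log (1 - q ^ (8 * (n + 1)))) + T8)))
      = q * (((∏ n ∈ Finset.range 10, (1 - q ^ (2 * (n + 1)))) ^ 4
            * (∏ n ∈ Finset.range 2, (1 - q ^ (8 * (n + 1)))) ^ 2)
          * Real.exp (4 * T2 + 2 * T8)) := by
    rw [show -(π * t)
        + (4 * ((∑ n ∈ Finset.range 10, Real.log (1 - q ^ (2 * (n + 1)))) + T2)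
          + 2 * ((∑ n ∈ Finset.range 2, Real.log (1 - q ^ (8 * (n + 1)))) + T8))
      = -(π * t) + ((((4:ℕ):ℝ) * (∑ n ∈ Finset.range 10, Real.log (1 - q ^ (2 * (n + 1))))
          + ((2:ℕ):ℝ) * (∑ n ∈ Finset.range 2, Real.log (1 - q ^ (8 * (n + 1)))))
        + (4 * T2 + 2 * T8)) by push_cast; ring]
    rw [Real.exp_add, Real.exp_add, Real.exp_add, Real.exp_nat_mul, Real.exp_nat_mul,
      hexpS2, hexpS8, hqt]
  rw [hval] at hs
  -- bounds
  have hprod_mem : ∀ (K k : ℕ), 1 ≤ k → (0:ℝ) ≤ ∏ n ∈ Finset.range K, (1 - q ^ (k * (n + 1))) := by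
    intro K k hk
    apply Finset.prod_nonneg
    intro n _
    exact (hfacpos _ (Nat.mul_pos hk (Nat.succ_pos n))).le
  have hprod_le : ∀ (K k : ℕ), 1 ≤ k → (∏ n ∈ Finset.range K, (1 - q ^ (k * (n + 1)))) ≤ 1 := by
    intro K k hk
    apply Finset.prod_le_one
    · intro n _; exact (hfacpos _ (Nat.mul_pos hk (Nat.succ_pos n))).le
    · intro n _
      have : (0:ℝ) ≤ q ^ (k * (n + 1)) := by positivity
      linarith
  have hF0 : (0:ℝ) ≤ (∏ n ∈ Finset.range 10, (1 - q ^ (2 * (n + 1)))) ^ 4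
      * (∏ n ∈ Finset.range 2, (1 - q ^ (8 * (n + 1)))) ^ 2 := by positivity
  have hF1 : (∏ n ∈ Finset.range 10, (1 - q ^ (2 * (n + 1)))) ^ 4
      * (∏ n ∈ Finset.range 2, (1 - q ^ (8 * (n + 1)))) ^ 2 ≤ 1 := by
    apply mul_le_one₀
    · exact pow_le_one₀ (hprod_mem 10 2 (by norm_num)) (hprod_le 10 2 (by norm_num))
    · positivity
    · exact pow_le_one₀ (hprod_mem 2 8 (by norm_num)) (hprod_le 2 8 (by norm_num))
  have hEn : 4 * T2 + 2 * T8 ≤ 0 := by linarith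
  have hEb : -(4 * T2 + 2 * T8) ≤ 24 * q ^ 22 := by
    norm_num at hT2b hT8b
    have h24 : q ^ 24 ≤ q ^ 22 := pow_le_pow_of_le_one hq0.le hq1.le (by omega)
    linarith
  have hexpE : |Real.exp (4 * T2 + 2 * T8) - 1| ≤ 24 * q ^ 22 := by
    have h1 : Real.exp (4 * T2 + 2 * T8) ≤ 1 := by
      rw [← Real.exp_zero]
      exact Real.exp_le_exp.mpr hEn
    have h2 : 1 + (4 * T2 + 2 * T8) ≤ Real.exp (4 * T2 + 2 * T8) := by
      have := Real.add_one_le_exp (4 * T2 + 2 * T8)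
      linarith
    rw [abs_of_nonpos (by linarith)]
    linarith
  -- split the sum
  have hsplit := Summable.sum_add_tsum_nat_add 22 hs.summable
  have htsum := hs.tsum_eq
  have htail := tail_le a M hM 22 q hq0 hq4
  have heq : (∑ n ∈ Finset.range 22, a (n + 1) * ((q : ℝ) : ℂ) ^ (n + 1))
      - ∑ n ∈ Finset.range 22, c1f n * ((q : ℝ) : ℂ) ^ (n + 1)
      = (((q * (((∏ n ∈ Finset.range 10, (1 - q ^ (2 * (n + 1)))) ^ 4
            * (∏ n ∈ Finset.range 2, (1 - q ^ (8 * (n + 1)))) ^ 2)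
          * Real.exp (4 * T2 + 2 * T8)) : ℝ) : ℂ)
        - ∑ n ∈ Finset.range 22, c1f n * ((q : ℝ) : ℂ) ^ (n + 1))
      - ∑' n : ℕ, a (n + 22 + 1) * ((q : ℝ) : ℂ) ^ (n + 22 + 1) := by
    rw [htsum] at hsplit
    linear_combination hsplit
  rw [heq]
  have hXbound : ‖(((q * (((∏ n ∈ Finset.range 10, (1 - q ^ (2 * (n + 1)))) ^ 4
            * (∏ n ∈ Finset.range 2, (1 - q ^ (8 * (n + 1)))) ^ 2)
          * Real.exp (4 * T2 + 2 * T8)) : ℝ) : ℂ)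
        - ∑ n ∈ Finset.range 22, c1f n * ((q : ℝ) : ℂ) ^ (n + 1))‖
      ≤ ((hNorm L1co : ℝ) + 24) * q ^ 23 := by
    rw [sum_c1 ((q : ℝ) : ℂ)]
    have hcast : ((q : ℝ) : ℂ) - 4 * ((q : ℝ) : ℂ) ^ 3 + 2 * ((q : ℝ) : ℂ) ^ 5
          + 8 * ((q : ℝ) : ℂ) ^ 7 - 7 * ((q : ℝ) : ℂ) ^ 9 + 4 * ((q : ℝ) : ℂ) ^ 11
          - 14 * ((q : ℝ) : ℂ) ^ 13 - 8 * ((q : ℝ) : ℂ) ^ 15 + 18 * ((q : ℝ) : ℂ) ^ 17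
          + 12 * ((q : ℝ) : ℂ) ^ 19 + 32 * ((q : ℝ) : ℂ) ^ 21
        = (((q - 4 * q ^ 3 + 2 * q ^ 5 + 8 * q ^ 7 - 7 * q ^ 9 + 4 * q ^ 11 - 14 * q ^ 13
          - 8 * q ^ 15 + 18 * q ^ 17 + 12 * q ^ 19 + 32 * q ^ 21 : ℝ)) : ℂ) := by
      push_cast
      ring
    rw [hcast, ← Complex.ofReal_sub, Complex.norm_real, Real.norm_eq_abs]
    have hident : q * (((∏ n ∈ Finset.range 10, (1 - q ^ (2 * (n + 1)))) ^ 4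
            * (∏ n ∈ Finset.range 2, (1 - q ^ (8 * (n + 1)))) ^ 2)
          * Real.exp (4 * T2 + 2 * T8))
        - (q - 4 * q ^ 3 + 2 * q ^ 5 + 8 * q ^ 7 - 7 * q ^ 9 + 4 * q ^ 11 - 14 * q ^ 13
          - 8 * q ^ 15 + 18 * q ^ 17 + 12 * q ^ 19 + 32 * q ^ 21)
        = q * ((∏ n ∈ Finset.range 10, (1 - q ^ (2 * (n + 1)))) ^ 4
            * (∏ n ∈ Finset.range 2, (1 - q ^ (8 * (n + 1)))) ^ 2)
          * (Real.exp (4 * T2 + 2 * T8) - 1)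
          + q ^ 23 * hEval (q ^ 2) L1co := by
      linear_combination polyid1 q
    rw [hident]
    have h1 : |q * ((∏ n ∈ Finset.range 10, (1 - q ^ (2 * (n + 1)))) ^ 4
            * (∏ n ∈ Finset.range 2, (1 - q ^ (8 * (n + 1)))) ^ 2)
          * (Real.exp (4 * T2 + 2 * T8) - 1)| ≤ 24 * q ^ 23 := by
      rw [abs_mul]
      have hqF : |q * ((∏ n ∈ Finset.range 10, (1 - q ^ (2 * (n + 1)))) ^ 4
            * (∏ n ∈ Finset.range 2, (1 - q ^ (8 * (n + 1)))) ^ 2)| ≤ q := by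
        rw [abs_mul, abs_of_nonneg hq0.le, abs_of_nonneg hF0]
        nlinarith
      calc |q * ((∏ n ∈ Finset.range 10, (1 - q ^ (2 * (n + 1)))) ^ 4
            * (∏ n ∈ Finset.range 2, (1 - q ^ (8 * (n + 1)))) ^ 2)|
              * |Real.exp (4 * T2 + 2 * T8) - 1|
          ≤ q * (24 * q ^ 22) := mul_le_mul hqF hexpE (abs_nonneg _) hq0.le
        _ = 24 * q ^ 23 := by ring
    have h2 : |q ^ 23 * hEval (q ^ 2) L1co| ≤ (hNorm L1co : ℝ) * q ^ 23 := by
      rw [abs_mul, abs_of_nonneg (by positivity : (0:ℝ) ≤ q ^ 23)]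
      have hb := hEval_le (q ^ 2) (by positivity) (by nlinarith) L1co
      calc q ^ 23 * |hEval (q ^ 2) L1co| ≤ q ^ 23 * (hNorm L1co : ℝ) :=
            mul_le_mul_of_nonneg_left hb (by positivity)
        _ = (hNorm L1co : ℝ) * q ^ 23 := by ring
    calc |q * ((∏ n ∈ Finset.range 10, (1 - q ^ (2 * (n + 1)))) ^ 4
            * (∏ n ∈ Finset.range 2, (1 - q ^ (8 * (n + 1)))) ^ 2)
          * (Real.exp (4 * T2 + 2 * T8) - 1) + q ^ 23 * hEval (q ^ 2) L1co|
        ≤ |q * ((∏ n ∈ Finset.range 10, (1 - q ^ (2 * (n + 1)))) ^ 4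
            * (∏ n ∈ Finset.range 2, (1 - q ^ (8 * (n + 1)))) ^ 2)
          * (Real.exp (4 * T2 + 2 * T8) - 1)| + |q ^ 23 * hEval (q ^ 2) L1co| := abs_add_le _ _
      _ ≤ 24 * q ^ 23 + (hNorm L1co : ℝ) * q ^ 23 := by linarith
      _ = ((hNorm L1co : ℝ) + 24) * q ^ 23 := by ring
  calc ‖(((q * (((∏ n ∈ Finset.range 10, (1 - q ^ (2 * (n + 1)))) ^ 4
            * (∏ n ∈ Finset.range 2, (1 - q ^ (8 * (n + 1)))) ^ 2)
          * Real.exp (4 * T2 + 2 * T8)) : ℝ) : ℂ)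
        - ∑ n ∈ Finset.range 22, c1f n * ((q : ℝ) : ℂ) ^ (n + 1))
      - ∑' n : ℕ, a (n + 22 + 1) * ((q : ℝ) : ℂ) ^ (n + 22 + 1)‖
      ≤ ‖(((q * (((∏ n ∈ Finset.range 10, (1 - q ^ (2 * (n + 1)))) ^ 4
            * (∏ n ∈ Finset.range 2, (1 - q ^ (8 * (n + 1)))) ^ 2)
          * Real.exp (4 * T2 + 2 * T8)) : ℝ) : ℂ)
        - ∑ n ∈ Finset.range 22, c1f n * ((q : ℝ) : ℂ) ^ (n + 1))‖
      + ‖∑' n : ℕ, a (n + 22 + 1) * ((q : ℝ) : ℂ) ^ (n + 22 + 1)‖ := norm_sub_le _ _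
    _ ≤ ((hNorm L1co : ℝ) + 24) * q ^ 23 + M * (2 * q) ^ 23 := add_le_add hXbound htail
    _ = (M * 2 ^ 23 + ((hNorm L1co : ℝ) + 24)) * q ^ (22 + 1) := by
        rw [mul_pow]
        ring

lemma key2 (a : ℕ → ℂ) (M : ℝ)
    (hM : HasSum (fun n : ℕ => ‖a (n + 1)‖ * (1 / 2 : ℝ) ^ (n + 1)) M)
    (hsum : ∀ τ : ℂ, 0 < τ.im → HasSum (fun n : ℕ => a (n + 1) *
        Complex.exp ((Real.pi : ℂ) * Complex.I * ((n : ℂ) + 1) * τ))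
      (dedekindEta τ ^ 2 * dedekindEta (2 * τ) * dedekindEta (8 * τ))) :
    ∀ n < 15, a (n + 1) = c2f n := by
  apply coeffs_eq a c2f 15 (M * 2 ^ 16 + ((hNorm L2co : ℝ) + 20))
  intro q hq0 hq4
  have hq2 : q ≤ 1 / 2 := by linarith
  have hq1 : q < 1 := by linarith
  set t : ℝ := -Real.log q / π with ht_def
  have ht : 0 < t := by
    apply div_pos _ Real.pi_pos
    have := Real.log_neg hq0 hq1
    linarith
  have hqt : Real.exp (-(π * t)) = q := by
    rw [ht_def, show -(π * (-Real.log q / π)) = Real.log q by field_simp]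
    exact Real.exp_log hq0
  obtain ⟨T2, hP2, hT2n, hT2b⟩ := log_split q hq0 hq2 2 7 (by norm_num)
  obtain ⟨T4, hP4, hT4n, hT4b⟩ := log_split q hq0 hq2 4 3 (by norm_num)
  obtain ⟨T16, hP16, hT16n, hT16b⟩ := log_split q hq0 hq2 16 0 (by norm_num)
  rw [Finset.sum_range_zero, zero_add] at hP16
  have hP2' : HasProd (fun n : ℕ => (1 - Real.exp (-(π * t)) ^ (2 * (n + 1))))
      (Real.exp ((∑ n ∈ Finset.range 7, Real.log (1 - q ^ (2 * (n + 1)))) + T2)) := by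
    rw [hqt]; exact hP2
  have hP4' : HasProd (fun n : ℕ => (1 - Real.exp (-(π * t)) ^ (4 * (n + 1))))
      (Real.exp ((∑ n ∈ Finset.range 3, Real.log (1 - q ^ (4 * (n + 1)))) + T4)) := by
    rw [hqt]; exact hP4
  have hP16' : HasProd (fun n : ℕ => (1 - Real.exp (-(π * t)) ^ (16 * (n + 1))))
      (Real.exp T16) := by
    rw [hqt]; exact hP16
  have hg := g2_val t _ _ _ hP2' hP4' hP16'
  have him : (0:ℝ) < ((t : ℂ) * Complex.I).im := by simpa using ht
  have hs := hsum ((t : ℂ) * Complex.I) him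
  rw [hg] at hs
  have hfun : (fun n : ℕ => a (n + 1) *
        Complex.exp ((Real.pi : ℂ) * Complex.I * ((n : ℂ) + 1) * ((t : ℂ) * Complex.I)))
      = fun n : ℕ => a (n + 1) * ((q : ℝ) : ℂ) ^ (n + 1) := by
    funext n
    rw [cexp_val t n, hqt]
    push_cast
    ring
  rw [hfun] at hs
  have hfacpos : ∀ m : ℕ, 1 ≤ m → (0:ℝ) < 1 - q ^ m := by
    intro m hm
    have h1 : q ^ m ≤ q ^ 1 := pow_le_pow_of_le_one hq0.le hq1.le hm
    rw [pow_one] at h1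
    linarith
  have hexpS2 : Real.exp (∑ n ∈ Finset.range 7, Real.log (1 - q ^ (2 * (n + 1))))
      = ∏ n ∈ Finset.range 7, (1 - q ^ (2 * (n + 1))) := by
    rw [Real.exp_sum]
    exact Finset.prod_congr rfl fun n _ => Real.exp_log (hfacpos _ (by omega))
  have hexpS4 : Real.exp (∑ n ∈ Finset.range 3, Real.log (1 - q ^ (4 * (n + 1))))
      = ∏ n ∈ Finset.range 3, (1 - q ^ (4 * (n + 1))) := by
    rw [Real.exp_sum]
    exact Finset.prod_congr rfl fun n _ => Real.exp_log (hfacpos _ (by omega))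
  have hval : Real.exp (-(π * t)
        + (2 * ((∑ n ∈ Finset.range 7, Real.log (1 - q ^ (2 * (n + 1)))) + T2)
          + ((∑ n ∈ Finset.range 3, Real.log (1 - q ^ (4 * (n + 1)))) + T4) + T16))
      = q * (((∏ n ∈ Finset.range 7, (1 - q ^ (2 * (n + 1)))) ^ 2
            * ∏ n ∈ Finset.range 3, (1 - q ^ (4 * (n + 1))))
          * Real.exp (2 * T2 + T4 + T16)) := by
    rw [show -(π * t)
        + (2 * ((∑ n ∈ Finset.range 7, Real.log (1 - q ^ (2 * (n + 1)))) + T2)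
          + ((∑ n ∈ Finset.range 3, Real.log (1 - q ^ (4 * (n + 1)))) + T4) + T16)
      = -(π * t) + ((((2:ℕ):ℝ) * (∑ n ∈ Finset.range 7, Real.log (1 - q ^ (2 * (n + 1))))
          + (∑ n ∈ Finset.range 3, Real.log (1 - q ^ (4 * (n + 1)))))
        + (2 * T2 + T4 + T16)) by push_cast; ring]
    rw [Real.exp_add, Real.exp_add, Real.exp_add, Real.exp_nat_mul, hexpS2, hexpS4, hqt]
  rw [hval] at hs
  have hprod_mem : ∀ (K k : ℕ), 1 ≤ k → (0:ℝ) ≤ ∏ n ∈ Finset.range K, (1 - q ^ (k * (n + 1))) := by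
    intro K k hk
    apply Finset.prod_nonneg
    intro n _
    exact (hfacpos _ (Nat.mul_pos hk (Nat.succ_pos n))).le
  have hprod_le : ∀ (K k : ℕ), 1 ≤ k → (∏ n ∈ Finset.range K, (1 - q ^ (k * (n + 1)))) ≤ 1 := by
    intro K k hk
    apply Finset.prod_le_one
    · intro n _; exact (hfacpos _ (Nat.mul_pos hk (Nat.succ_pos n))).le
    · intro n _
      have : (0:ℝ) ≤ q ^ (k * (n + 1)) := by positivity
      linarith
  have hF0 : (0:ℝ) ≤ (∏ n ∈ Finset.range 7, (1 - q ^ (2 * (n + 1)))) ^ 2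
      * ∏ n ∈ Finset.range 3, (1 - q ^ (4 * (n + 1))) := by
    have := hprod_mem 3 4 (by norm_num)
    positivity
  have hF1 : (∏ n ∈ Finset.range 7, (1 - q ^ (2 * (n + 1)))) ^ 2
      * ∏ n ∈ Finset.range 3, (1 - q ^ (4 * (n + 1))) ≤ 1 := by
    apply mul_le_one₀
    · exact pow_le_one₀ (hprod_mem 7 2 (by norm_num)) (hprod_le 7 2 (by norm_num))
    · exact hprod_mem 3 4 (by norm_num)
    · exact hprod_le 3 4 (by norm_num)
  have hEn : 2 * T2 + T4 + T16 ≤ 0 := by linarith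
  have hEb : -(2 * T2 + T4 + T16) ≤ 20 * q ^ 16 := by
    norm_num at hT2b hT4b hT16b
    linarith
  have hexpE : |Real.exp (2 * T2 + T4 + T16) - 1| ≤ 20 * q ^ 16 := by
    have h1 : Real.exp (2 * T2 + T4 + T16) ≤ 1 := by
      rw [← Real.exp_zero]
      exact Real.exp_le_exp.mpr hEn
    have h2 : 1 + (2 * T2 + T4 + T16) ≤ Real.exp (2 * T2 + T4 + T16) := by
      have := Real.add_one_le_exp (2 * T2 + T4 + T16)
      linarith
    rw [abs_of_nonpos (by linarith)]
    linarith
  have hsplit := Summable.sum_add_tsum_nat_add 15 hs.summable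
  have htsum := hs.tsum_eq
  have htail := tail_le a M hM 15 q hq0 hq4
  have heq : (∑ n ∈ Finset.range 15, a (n + 1) * ((q : ℝ) : ℂ) ^ (n + 1))
      - ∑ n ∈ Finset.range 15, c2f n * ((q : ℝ) : ℂ) ^ (n + 1)
      = (((q * (((∏ n ∈ Finset.range 7, (1 - q ^ (2 * (n + 1)))) ^ 2
            * ∏ n ∈ Finset.range 3, (1 - q ^ (4 * (n + 1))))
          * Real.exp (2 * T2 + T4 + T16)) : ℝ) : ℂ)
        - ∑ n ∈ Finset.range 15, c2f n * ((q : ℝ) : ℂ) ^ (n + 1))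
      - ∑' n : ℕ, a (n + 15 + 1) * ((q : ℝ) : ℂ) ^ (n + 15 + 1) := by
    rw [htsum] at hsplit
    linear_combination hsplit
  rw [heq]
  have hXbound : ‖(((q * (((∏ n ∈ Finset.range 7, (1 - q ^ (2 * (n + 1)))) ^ 2
            * ∏ n ∈ Finset.range 3, (1 - q ^ (4 * (n + 1))))
          * Real.exp (2 * T2 + T4 + T16)) : ℝ) : ℂ)
        - ∑ n ∈ Finset.range 15, c2f n * ((q : ℝ) : ℂ) ^ (n + 1))‖
      ≤ ((hNorm L2co : ℝ) + 20) * q ^ 16 := by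
    rw [sum_c2 ((q : ℝ) : ℂ)]
    have hcast : ((q : ℝ) : ℂ) - 2 * ((q : ℝ) : ℂ) ^ 3 - 2 * ((q : ℝ) : ℂ) ^ 5
          + 4 * ((q : ℝ) : ℂ) ^ 7 + ((q : ℝ) : ℂ) ^ 9 + 2 * ((q : ℝ) : ℂ) ^ 11
          - 2 * ((q : ℝ) : ℂ) ^ 13 - 4 * ((q : ℝ) : ℂ) ^ 15
        = (((q - 2 * q ^ 3 - 2 * q ^ 5 + 4 * q ^ 7 + q ^ 9 + 2 * q ^ 11
          - 2 * q ^ 13 - 4 * q ^ 15 : ℝ)) : ℂ) := by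
      push_cast
      ring
    rw [hcast, ← Complex.ofReal_sub, Complex.norm_real, Real.norm_eq_abs]
    have hident : q * (((∏ n ∈ Finset.range 7, (1 - q ^ (2 * (n + 1)))) ^ 2
            * ∏ n ∈ Finset.range 3, (1 - q ^ (4 * (n + 1))))
          * Real.exp (2 * T2 + T4 + T16))
        - (q - 2 * q ^ 3 - 2 * q ^ 5 + 4 * q ^ 7 + q ^ 9 + 2 * q ^ 11
          - 2 * q ^ 13 - 4 * q ^ 15)
        = q * ((∏ n ∈ Finset.range 7, (1 - q ^ (2 * (n + 1)))) ^ 2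
            * ∏ n ∈ Finset.range 3, (1 - q ^ (4 * (n + 1))))
          * (Real.exp (2 * T2 + T4 + T16) - 1)
          + q ^ 16 * (q * hEval (q ^ 2) L2co) := by
      linear_combination polyid2 q
    rw [hident]
    have h1 : |q * ((∏ n ∈ Finset.range 7, (1 - q ^ (2 * (n + 1)))) ^ 2
            * ∏ n ∈ Finset.range 3, (1 - q ^ (4 * (n + 1))))
          * (Real.exp (2 * T2 + T4 + T16) - 1)| ≤ 20 * q ^ 16 := by
      rw [abs_mul]
      have hqF : |q * ((∏ n ∈ Finset.range 7, (1 - q ^ (2 * (n + 1)))) ^ 2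
            * ∏ n ∈ Finset.range 3, (1 - q ^ (4 * (n + 1))))| ≤ 1 := by
        rw [abs_mul, abs_of_nonneg hq0.le, abs_of_nonneg hF0]
        nlinarith
      calc |q * ((∏ n ∈ Finset.range 7, (1 - q ^ (2 * (n + 1)))) ^ 2
            * ∏ n ∈ Finset.range 3, (1 - q ^ (4 * (n + 1))))|
              * |Real.exp (2 * T2 + T4 + T16) - 1|
          ≤ 1 * (20 * q ^ 16) := mul_le_mul hqF hexpE (abs_nonneg _) zero_le_one
        _ = 20 * q ^ 16 := by ring
    have h2 : |q ^ 16 * (q * hEval (q ^ 2) L2co)| ≤ (hNorm L2co : ℝ) * q ^ 16 := by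
      rw [abs_mul, abs_of_nonneg (by positivity : (0:ℝ) ≤ q ^ 16), abs_mul,
        abs_of_nonneg hq0.le]
      have hb := hEval_le (q ^ 2) (by positivity) (by nlinarith) L2co
      have hq_he : q * |hEval (q ^ 2) L2co| ≤ 1 * (hNorm L2co : ℝ) :=
        mul_le_mul hq1.le hb (abs_nonneg _) zero_le_one
      calc q ^ 16 * (q * |hEval (q ^ 2) L2co|) ≤ q ^ 16 * (1 * (hNorm L2co : ℝ)) :=
            mul_le_mul_of_nonneg_left hq_he (by positivity)
        _ = (hNorm L2co : ℝ) * q ^ 16 := by ring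
    calc |q * ((∏ n ∈ Finset.range 7, (1 - q ^ (2 * (n + 1)))) ^ 2
            * ∏ n ∈ Finset.range 3, (1 - q ^ (4 * (n + 1))))
          * (Real.exp (2 * T2 + T4 + T16) - 1) + q ^ 16 * (q * hEval (q ^ 2) L2co)|
        ≤ |q * ((∏ n ∈ Finset.range 7, (1 - q ^ (2 * (n + 1)))) ^ 2
            * ∏ n ∈ Finset.range 3, (1 - q ^ (4 * (n + 1))))
          * (Real.exp (2 * T2 + T4 + T16) - 1)| + |q ^ 16 * (q * hEval (q ^ 2) L2co)| :=
          abs_add_le _ _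
      _ ≤ 20 * q ^ 16 + (hNorm L2co : ℝ) * q ^ 16 := by linarith
      _ = ((hNorm L2co : ℝ) + 20) * q ^ 16 := by ring
  calc ‖(((q * (((∏ n ∈ Finset.range 7, (1 - q ^ (2 * (n + 1)))) ^ 2
            * ∏ n ∈ Finset.range 3, (1 - q ^ (4 * (n + 1))))
          * Real.exp (2 * T2 + T4 + T16)) : ℝ) : ℂ)
        - ∑ n ∈ Finset.range 15, c2f n * ((q : ℝ) : ℂ) ^ (n + 1))
      - ∑' n : ℕ, a (n + 15 + 1) * ((q : ℝ) : ℂ) ^ (n + 15 + 1)‖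
      ≤ ‖(((q * (((∏ n ∈ Finset.range 7, (1 - q ^ (2 * (n + 1)))) ^ 2
            * ∏ n ∈ Finset.range 3, (1 - q ^ (4 * (n + 1))))
          * Real.exp (2 * T2 + T4 + T16)) : ℝ) : ℂ)
        - ∑ n ∈ Finset.range 15, c2f n * ((q : ℝ) : ℂ) ^ (n + 1))‖
      + ‖∑' n : ℕ, a (n + 15 + 1) * ((q : ℝ) : ℂ) ^ (n + 15 + 1)‖ := norm_sub_le _ _
    _ ≤ ((hNorm L2co : ℝ) + 20) * q ^ 16 + M * (2 * q) ^ 16 := add_le_add hXbound htail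
    _ = (M * 2 ^ 16 + ((hNorm L2co : ℝ) + 20)) * q ^ (15 + 1) := by
        rw [mul_pow]
        ring

end EtaNM

/-- The eta-products `η(τ)⁴η(4τ)²` and `η(τ)²η(2τ)η(8τ)` of the cycle shapes `1⁴4²` and
`1²2¹8¹` (the `M₁₂` conjugacy classes `4B` and `8B`) are not multiplicative: for any Fourier
expansion `g(τ) = ∑_{n=1}^∞ a n · exp(iπnτ)` valid on the upper half-plane, it is not the
case that `a 1 = 1` and `a (nm) = a n · a m` for all coprime `n, m ≥ 1`. -/
theorem shape_4B_8B_etaProducts_not_multiplicative :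
    (∀ a : ℕ → ℂ,
      (∀ τ : ℂ, 0 < τ.im →
        HasSum (fun n : ℕ => a (n + 1) *
            Complex.exp ((Real.pi : ℂ) * Complex.I * (n + 1) * τ))
          (dedekindEta τ ^ 4 * dedekindEta (4 * τ) ^ 2)) →
      ¬ (a 1 = 1 ∧ ∀ n m : ℕ, 1 ≤ n → 1 ≤ m → Nat.Coprime n m → a (n * m) = a n * a m)) ∧
    (∀ a : ℕ → ℂ,
      (∀ τ : ℂ, 0 < τ.im →
        HasSum (fun n : ℕ => a (n + 1) *
            Complex.exp ((Real.pi : ℂ) * Complex.I * (n + 1) * τ))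
          (dedekindEta τ ^ 2 * dedekindEta (2 * τ) * dedekindEta (8 * τ))) →
      ¬ (a 1 = 1 ∧ ∀ n m : ℕ, 1 ≤ n → 1 ≤ m → Nat.Coprime n m → a (n * m) = a n * a m)) := by
  have hM_gen : ∀ (a : ℕ → ℂ) (g : ℂ → ℂ),
      (∀ τ : ℂ, 0 < τ.im → HasSum (fun n : ℕ => a (n + 1) *
          Complex.exp ((Real.pi : ℂ) * Complex.I * ((n : ℂ) + 1) * τ)) (g τ)) →
      Summable (fun n : ℕ => ‖a (n + 1)‖ * (1 / 2 : ℝ) ^ (n + 1)) := by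
    intro a g hsum
    set t0 : ℝ := Real.log 2 / π with ht0
    have ht0p : 0 < t0 := div_pos (Real.log_pos (by norm_num)) Real.pi_pos
    have hq0t : Real.exp (-(Real.pi * t0)) = 1 / 2 := by
      rw [ht0, show -(Real.pi * (Real.log 2 / Real.pi)) = -Real.log 2 by
        field_simp]
      rw [Real.exp_neg, Real.exp_log (by norm_num)]
      norm_num
    have him : (0:ℝ) < ((t0 : ℂ) * Complex.I).im := by simpa using ht0p
    have hs0 := hsum ((t0 : ℂ) * Complex.I) him
    have h1 := hs0.summable.norm
    have h2 : (fun n : ℕ => ‖a (n + 1) * Complex.exp ((Real.pi : ℂ) * Complex.I *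
          ((n : ℂ) + 1) * ((t0 : ℂ) * Complex.I))‖)
        = fun n : ℕ => ‖a (n + 1)‖ * (1 / 2 : ℝ) ^ (n + 1) := by
      funext n
      rw [EtaNM.cexp_val t0 n, hq0t, norm_mul, Complex.norm_real, Real.norm_eq_abs,
        abs_of_nonneg (by positivity)]
    rwa [h2] at h1
  constructor
  · intro a hsum
    rintro ⟨-, hm⟩
    have hsn := hM_gen a _ hsum
    have hc := EtaNM.key1 a _ hsn.hasSum hsum
    have h3 : a 3 = EtaNM.c1f 2 := hc 2 (by norm_num)
    have h7 : a 7 = EtaNM.c1f 6 := hc 6 (by norm_num)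
    have h21 : a 21 = EtaNM.c1f 20 := hc 20 (by norm_num)
    have hco : Nat.Coprime 3 7 := by decide
    have hmul := hm 3 7 (by norm_num) (by norm_num) hco
    rw [show (3 * 7 : ℕ) = 21 by norm_num] at hmul
    rw [h21, h3, h7] at hmul
    norm_num [EtaNM.c1f] at hmul
  · intro a hsum
    rintro ⟨-, hm⟩
    have hsn := hM_gen a _ hsum
    have hc := EtaNM.key2 a _ hsn.hasSum hsum
    have h3 : a 3 = EtaNM.c2f 2 := hc 2 (by norm_num)
    have h5 : a 5 = EtaNM.c2f 4 := hc 4 (by norm_num)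
    have h15 : a 15 = EtaNM.c2f 14 := hc 14 (by norm_num)
    have hco : Nat.Coprime 3 5 := by decide
    have hmul := hm 3 5 (by norm_num) (by norm_num) hco
    rw [show (3 * 5 : ℕ) = 15 by norm_num] at hmul
    rw [h15, h3, h5] at hmul
    norm_num [EtaNM.c2f] at hmul
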